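/- For all n ≥ 1, the maximum value of mmp^{(1,0,0,0)} over up-down permutations of length 2n+1 is 2n-1, and the number of up-down permutations of length 2n+1 attaining this maximum equals 2n times the number of up-down permutations of length 2n-1. -/

import Mathlib

open Finset

/-- Number of indices `i` such that there exists `j > i` with `σ j > σ i`
    (the statistic mmp^{(1,0,0,0)}). -/
noncomputable def mmp1000 {n : ℕ} (σ : Equiv.Perm (Fin n)) : ℕ :=
  (Finset.univ.filter (fun i : Fin n => ∃ j : Fin n, i < j ∧ σ i < σ j)).card

/-- Number of indices `i` such that there exists `j < i` with `σ j > σ i`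
    (the statistic mmp^{(0,1,0,0)}). -/
noncomputable def mmp0100 {n : ℕ} (σ : Equiv.Perm (Fin n)) : ℕ :=
  (Finset.univ.filter (fun i : Fin n => ∃ j : Fin n, j < i ∧ σ i < σ j)).card

/-- Number of indices `i` such that there exists `j > i` with `σ j < σ i`
    (the statistic mmp^{(0,0,0,1)}). -/
noncomputable def mmp0001 {n : ℕ} (σ : Equiv.Perm (Fin n)) : ℕ :=
  (Finset.univ.filter (fun i : Fin n => ∃ j : Fin n, i < j ∧ σ j < σ i)).card

/-- σ is up-down: σ(1) < σ(2) > σ(3) < σ(4) > ⋯ (0-indexed: ascent at even indices). -/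
def IsUpDown {n : ℕ} (σ : Equiv.Perm (Fin n)) : Prop :=
  ∀ i : Fin n, ∀ h : (i : ℕ) + 1 < n,
    if (i : ℕ) % 2 = 0 then σ i < σ ⟨(i : ℕ) + 1, h⟩ else σ ⟨(i : ℕ) + 1, h⟩ < σ i

/-- σ is down-up: σ(1) > σ(2) < σ(3) > σ(4) < ⋯ (0-indexed: descent at even indices). -/
def IsDownUp {n : ℕ} (σ : Equiv.Perm (Fin n)) : Prop :=
  ∀ i : Fin n, ∀ h : (i : ℕ) + 1 < n,
    if (i : ℕ) % 2 = 0 then σ ⟨(i : ℕ) + 1, h⟩ < σ i else σ i < σ ⟨(i : ℕ) + 1, h⟩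

open scoped Classical in
/-- The set of up-down permutations of length `m`. -/
noncomputable def UDset (m : ℕ) : Finset (Equiv.Perm (Fin m)) :=
  Finset.univ.filter (fun σ => IsUpDown σ)

open scoped Classical in
/-- The set of down-up permutations of length `m`. -/
noncomputable def DUset (m : ℕ) : Finset (Equiv.Perm (Fin m)) :=
  Finset.univ.filter (fun σ => IsDownUp σ)

/-- The reverse of σ: σ^r(i) = σ(n+1-i). -/
def permReverse {n : ℕ} (σ : Equiv.Perm (Fin n)) : Equiv.Perm (Fin n) :=
  Fin.revPerm.trans σ

/-- The complement of σ: σ^c(i) = n+1-σ(i). -/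
def permComplement {n : ℕ} (σ : Equiv.Perm (Fin n)) : Equiv.Perm (Fin n) :=
  σ.trans Fin.revPerm

/-- A_{2n}(x) = Σ_{σ ∈ UD_{2n}} x^{mmp^{(1,0,0,0)}(σ)}. -/
noncomputable def Apoly (n : ℕ) (x : ℤ) : ℤ :=
  ∑ σ ∈ UDset (2 * n), x ^ mmp1000 σ

/-- B_{2n+1}(x) = Σ_{σ ∈ UD_{2n+1}} x^{mmp^{(1,0,0,0)}(σ)}. -/
noncomputable def Bpoly (n : ℕ) (x : ℤ) : ℤ :=
  ∑ σ ∈ UDset (2 * n + 1), x ^ mmp1000 σ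

/-- C_{2n}(x) = Σ_{σ ∈ DU_{2n}} x^{mmp^{(1,0,0,0)}(σ)}. -/
noncomputable def Cpoly (n : ℕ) (x : ℤ) : ℤ :=
  ∑ σ ∈ DUset (2 * n), x ^ mmp1000 σ

/-- D_{2n+1}(x) = Σ_{σ ∈ DU_{2n+1}} x^{mmp^{(1,0,0,0)}(σ)}. -/
noncomputable def Dpoly (n : ℕ) (x : ℤ) : ℤ :=
  ∑ σ ∈ DUset (2 * n + 1), x ^ mmp1000 σ

/-- Number of up-down permutations of length m. -/
noncomputable def udCount (m : ℕ) : ℕ := (UDset m).card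

/-- Number of down-up permutations of length m. -/
noncomputable def duCount (m : ℕ) : ℕ := (DUset m).card

open scoped Classical in
/-- |{σ ∈ UD_{2m} : mmp^{(1,0,0,0)}(σ) = c}|. -/
noncomputable def AcountEq (m c : ℕ) : ℕ :=
  ((UDset (2 * m)).filter (fun σ => mmp1000 σ = c)).card

open scoped Classical in
/-- |{σ ∈ DU_{2m+1} : mmp^{(1,0,0,0)}(σ) = c}|. -/
noncomputable def DcountEq (m c : ℕ) : ℕ :=
  ((DUset (2 * m + 1)).filter (fun σ => mmp1000 σ = c)).card

open scoped Classical in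
/-- |{σ ∈ UD_{2m+1} : mmp^{(1,0,0,0)}(σ) = c}|. -/
noncomputable def BcountEq (m c : ℕ) : ℕ :=
  ((UDset (2 * m + 1)).filter (fun σ => mmp1000 σ = c)).card

open scoped Classical in
/-- |{σ ∈ DU_{2m} : mmp^{(1,0,0,0)}(σ) = c}|. -/
noncomputable def CcountEq (m c : ℕ) : ℕ :=
  ((DUset (2 * m)).filter (fun σ => mmp1000 σ = c)).card

namespace Stmt13Aux

def eNat (v x : ℕ) : ℕ := if x < v then x else x + 1
def dNat (v x : ℕ) : ℕ := if x < v then x else x - 1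

lemma eNat_le (v x : ℕ) : eNat v x ≤ x + 1 := by unfold eNat; split_ifs <;> omega
lemma eNat_ge (v x : ℕ) : x ≤ eNat v x := by unfold eNat; split_ifs <;> omega
lemma eNat_ne (v x : ℕ) : eNat v x ≠ v := by unfold eNat; split_ifs <;> omega
lemma eNat_lt_iff (v x y : ℕ) : eNat v x < eNat v y ↔ x < y := by
  unfold eNat; split_ifs <;> omega
lemma eNat_inj (v x y : ℕ) (h : eNat v x = eNat v y) : x = y := by
  unfold eNat at h; split_ifs at h <;> omega
lemma d_e (v x : ℕ) : dNat v (eNat v x) = x := by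
  unfold eNat dNat; split_ifs <;> omega
lemma e_d (v x : ℕ) (h : x ≠ v) : eNat v (dNat v x) = x := by
  unfold eNat dNat; split_ifs <;> omega
lemma dNat_lt_iff (v x y : ℕ) (hx : x ≠ v) (hy : y ≠ v) : dNat v x < dNat v y ↔ x < y := by
  unfold dNat; split_ifs <;> omega
lemma dNat_lt (n v x : ℕ) (hn : 1 ≤ n) (hv : v < 2*n) (hx : x < 2*n) (hxv : x ≠ v) :
    dNat v x < 2*n - 1 := by unfold dNat; split_ifs <;> omega

/-- the zig-zag permutation of odd length, as a function -/
def zigFun (t : ℕ) : Fin (2*t+1) → Fin (2*t+1) :=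
  fun j => if h : j.val % 2 = 0 then ⟨j.val / 2, by omega⟩
    else ⟨t + 1 + j.val / 2, by have := j.2; omega⟩

lemma zigFun_inj (t : ℕ) : Function.Injective (zigFun t) := by
  intro a b h
  unfold zigFun at h
  have ha := a.2; have hb := b.2
  split_ifs at h <;>
    (apply Fin.ext; have := Fin.mk.injEq .. ▸ h; simp at h; omega)

noncomputable def zigPerm (t : ℕ) : Equiv.Perm (Fin (2*t+1)) :=
  Equiv.ofBijective _ (Finite.injective_iff_bijective.mp (zigFun_inj t))

lemma zigPerm_apply (t : ℕ) (j : Fin (2*t+1)) : zigPerm t j = zigFun t j := rfl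

lemma zigPerm_isUpDown (t : ℕ) : IsUpDown (zigPerm t) := by
  intro i h
  have hi := i.2
  rw [zigPerm_apply, zigPerm_apply]
  unfold zigFun
  simp only [Fin.val_mk]
  split_ifs with h1 h2 h2 <;> simp only [Fin.lt_def, Fin.val_mk] at * <;> omega

variable {n : ℕ}

/-- forward map: builds a permutation of `Fin (2n+1)` from a value `v` and
a permutation of `Fin (2n-1)`. -/
def fFun (v : Fin (2*n)) (τ : Equiv.Perm (Fin (2*n-1))) :
    Fin (2*n+1) → Fin (2*n+1) := fun i =>
  if h : i.val < 2*n-1 then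
    ⟨eNat v.val (τ ⟨i.val, h⟩).val,
      by have := (τ ⟨i.val, h⟩).2; have := eNat_le v.val (τ ⟨i.val, h⟩).val; omega⟩
  else if i.val = 2*n-1 then ⟨2*n, by omega⟩ else ⟨v.val, by have := v.2; omega⟩

lemma fFun_val_lt (v : Fin (2*n)) (τ : Equiv.Perm (Fin (2*n-1))) {i : Fin (2*n+1)}
    (h : i.val < 2*n-1) : (fFun v τ i).val = eNat v.val (τ ⟨i.val, h⟩).val := by
  unfold fFun; rw [dif_pos h]

lemma fFun_val_eq (v : Fin (2*n)) (τ : Equiv.Perm (Fin (2*n-1))) {i : Fin (2*n+1)}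
    (h : i.val = 2*n-1) (hn : 1 ≤ n) : (fFun v τ i).val = 2*n := by
  unfold fFun; rw [dif_neg (by omega), if_pos h]

lemma fFun_val_last (v : Fin (2*n)) (τ : Equiv.Perm (Fin (2*n-1))) {i : Fin (2*n+1)}
    (h : i.val = 2*n) (hn : 1 ≤ n) : (fFun v τ i).val = v.val := by
  unfold fFun; rw [dif_neg (by omega), if_neg (by omega)]

lemma fFun_inj (hn : 1 ≤ n) (v : Fin (2*n)) (τ : Equiv.Perm (Fin (2*n-1))) :
    Function.Injective (fFun v τ) := by
  have key : ∀ i : Fin (2*n+1), (i.val < 2*n-1) ∨ i.val = 2*n-1 ∨ i.val = 2*n :=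
    fun i => by have := i.2; omega
  intro a b h
  have hval := congrArg Fin.val h
  apply Fin.ext
  rcases key a with ha | ha | ha <;> rcases key b with hb | hb | hb
  · rw [fFun_val_lt v τ ha, fFun_val_lt v τ hb] at hval
    have h2 := eNat_inj _ _ _ hval
    have h3 := τ.injective (Fin.ext h2)
    simpa using h3
  · rw [fFun_val_lt v τ ha, fFun_val_eq v τ hb hn] at hval
    have := eNat_le v.val (τ ⟨a.val, ha⟩).val
    have := (τ ⟨a.val, ha⟩).2
    omega
  · rw [fFun_val_lt v τ ha, fFun_val_last v τ hb hn] at hval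
    exact absurd hval (eNat_ne _ _)
  · rw [fFun_val_eq v τ ha hn, fFun_val_lt v τ hb] at hval
    have := eNat_le v.val (τ ⟨b.val, hb⟩).val
    have := (τ ⟨b.val, hb⟩).2
    omega
  · omega
  · rw [fFun_val_eq v τ ha hn, fFun_val_last v τ hb hn] at hval
    have := v.2; omega
  · rw [fFun_val_last v τ ha hn, fFun_val_lt v τ hb] at hval
    exact absurd hval.symm (eNat_ne _ _)
  · rw [fFun_val_last v τ ha hn, fFun_val_eq v τ hb hn] at hval
    have := v.2; omega
  · omega

noncomputable def fPerm (hn : 1 ≤ n) (v : Fin (2*n)) (τ : Equiv.Perm (Fin (2*n-1))) :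
    Equiv.Perm (Fin (2*n+1)) :=
  Equiv.ofBijective _ (Finite.injective_iff_bijective.mp (fFun_inj hn v τ))

lemma fPerm_apply (hn : 1 ≤ n) (v : Fin (2*n)) (τ : Equiv.Perm (Fin (2*n-1)))
    (i : Fin (2*n+1)) : fPerm hn v τ i = fFun v τ i := rfl

lemma fPerm_top (hn : 1 ≤ n) (v : Fin (2*n)) (τ : Equiv.Perm (Fin (2*n-1))) :
    fPerm hn v τ ⟨2*n-1, by omega⟩ = ⟨2*n, by omega⟩ :=
  Fin.ext (fFun_val_eq v τ rfl hn)

lemma fPerm_isUpDown (hn : 1 ≤ n) (v : Fin (2*n)) (τ : Equiv.Perm (Fin (2*n-1)))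
    (hτ : IsUpDown τ) : IsUpDown (fPerm hn v τ) := by
  intro i h
  rw [fPerm_apply, fPerm_apply]
  have hi2 := i.2
  have key : (i.val + 1 < 2*n-1) ∨ i.val + 1 = 2*n-1 ∨ i.val = 2*n-1 := by omega
  rcases key with hc | hc | hc
  · -- both in region 1
    have e1 := fFun_val_lt v τ (i := i) (by omega)
    have e2 := fFun_val_lt v τ (i := ⟨i.val+1, h⟩) (show i.val + 1 < 2*n-1 from hc)
    have hτ' := hτ ⟨i.val, by omega⟩ (show i.val + 1 < 2*n-1 from hc)
    simp only [Fin.val_mk] at hτ' e2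
    by_cases hpar : i.val % 2 = 0
    · rw [if_pos hpar] at hτ' ⊢
      rw [Fin.lt_def, e1, e2, eNat_lt_iff]
      rw [Fin.lt_def] at hτ'
      exact hτ'
    · rw [if_neg hpar] at hτ' ⊢
      rw [Fin.lt_def, e1, e2, eNat_lt_iff]
      rw [Fin.lt_def] at hτ'
      exact hτ'
  · -- i+1 = 2n-1 : next value is the top
    have e1 := fFun_val_lt v τ (i := i) (show i.val < 2*n-1 by omega)
    have e2 := fFun_val_eq v τ (i := ⟨i.val+1, h⟩) (show i.val + 1 = 2*n-1 from hc) hn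
    rw [if_pos (by omega : i.val % 2 = 0), Fin.lt_def, e1, e2]
    have := eNat_le v.val (τ ⟨i.val, by omega⟩).val
    have := (τ ⟨i.val, by omega⟩).2
    omega
  · -- i = 2n-1 : descent from top to v
    have e1 := fFun_val_eq v τ (i := i) hc hn
    have e2 := fFun_val_last v τ (i := ⟨i.val+1, h⟩) (show i.val + 1 = 2*n by omega) hn
    rw [if_neg (by omega : ¬ i.val % 2 = 0), Fin.lt_def, e1, e2]
    have := v.2; omega

lemma dNat_inj (v x y : ℕ) (hx : x ≠ v) (hy : y ≠ v) (h : dNat v x = dNat v y) : x = y := by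
  unfold dNat at h; split_ifs at h <;> omega

lemma apply_ne_top (hn : 1 ≤ n) (σ : Equiv.Perm (Fin (2*n+1)))
    (hσ : σ ⟨2*n-1, by omega⟩ = ⟨2*n, by omega⟩) (i : Fin (2*n+1)) (hi : i.val ≠ 2*n-1) :
    (σ i).val ≠ 2*n := by
  intro hcon
  have h1 : σ i = ⟨2*n, by omega⟩ := Fin.ext hcon
  have h2 := σ.injective (h1.trans hσ.symm)
  exact hi (congrArg Fin.val h2)

lemma apply_ne_apply (σ : Equiv.Perm (Fin (2*n+1))) (i j : Fin (2*n+1)) (hij : i ≠ j) :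
    (σ i).val ≠ (σ j).val := fun hc => hij (σ.injective (Fin.ext hc))

/-- backward map -/
def gFun (hn : 1 ≤ n) (σ : Equiv.Perm (Fin (2*n+1)))
    (hσ : σ ⟨2*n-1, by omega⟩ = ⟨2*n, by omega⟩) : Fin (2*n-1) → Fin (2*n-1) := fun k =>
  ⟨dNat (σ ⟨2*n, by omega⟩).val (σ ⟨k.val, by have := k.2; omega⟩).val, by
    apply dNat_lt n _ _ hn
    · have := (σ ⟨2*n, by omega⟩).2
      have := apply_ne_top hn σ hσ ⟨2*n, by omega⟩ (by simp; omega)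
      omega
    · have := (σ ⟨k.val, by have := k.2; omega⟩).2
      have := apply_ne_top hn σ hσ ⟨k.val, by have := k.2; omega⟩ (by have := k.2; simp; omega)
      omega
    · exact apply_ne_apply σ _ _ (by have := k.2; simp [Fin.ext_iff]; omega)⟩

lemma gFun_val (hn : 1 ≤ n) (σ : Equiv.Perm (Fin (2*n+1)))
    (hσ : σ ⟨2*n-1, by omega⟩ = ⟨2*n, by omega⟩) (k : Fin (2*n-1)) :
    (gFun hn σ hσ k).val
      = dNat (σ ⟨2*n, by omega⟩).val (σ ⟨k.val, by have := k.2; omega⟩).val := rfl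

lemma apply_ne_last_val (hn : 1 ≤ n) (σ : Equiv.Perm (Fin (2*n+1))) (k : Fin (2*n-1)) :
    (σ ⟨k.val, by have := k.2; omega⟩).val ≠ (σ ⟨2*n, by omega⟩).val :=
  apply_ne_apply σ _ _ (by have := k.2; simp [Fin.ext_iff]; omega)

lemma gFun_inj (hn : 1 ≤ n) (σ : Equiv.Perm (Fin (2*n+1)))
    (hσ : σ ⟨2*n-1, by omega⟩ = ⟨2*n, by omega⟩) : Function.Injective (gFun hn σ hσ) := by
  intro a b h
  have hval := congrArg Fin.val h
  rw [gFun_val, gFun_val] at hval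
  have h2 := dNat_inj _ _ _ (apply_ne_last_val hn σ a) (apply_ne_last_val hn σ b) hval
  have h3 := σ.injective (Fin.ext h2)
  exact Fin.ext (by simpa using h3)

noncomputable def gPerm (hn : 1 ≤ n) (σ : Equiv.Perm (Fin (2*n+1)))
    (hσ : σ ⟨2*n-1, by omega⟩ = ⟨2*n, by omega⟩) : Equiv.Perm (Fin (2*n-1)) :=
  Equiv.ofBijective _ (Finite.injective_iff_bijective.mp (gFun_inj hn σ hσ))

lemma gPerm_val (hn : 1 ≤ n) (σ : Equiv.Perm (Fin (2*n+1)))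
    (hσ : σ ⟨2*n-1, by omega⟩ = ⟨2*n, by omega⟩) (k : Fin (2*n-1)) :
    (gPerm hn σ hσ k).val
      = dNat (σ ⟨2*n, by omega⟩).val (σ ⟨k.val, by have := k.2; omega⟩).val := rfl

lemma gPerm_isUpDown (hn : 1 ≤ n) (σ : Equiv.Perm (Fin (2*n+1)))
    (hσ : σ ⟨2*n-1, by omega⟩ = ⟨2*n, by omega⟩) (hud : IsUpDown σ) :
    IsUpDown (gPerm hn σ hσ) := by
  intro k hk
  have hk2 := k.2
  have e1 := gPerm_val hn σ hσ k
  have e2 := gPerm_val hn σ hσ ⟨k.val+1, hk⟩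
  simp only [Fin.val_mk] at e2
  have hud' := hud ⟨k.val, by omega⟩ (show k.val + 1 < 2*n+1 by omega)
  simp only [Fin.val_mk] at hud'
  have hne1 := apply_ne_last_val hn σ k
  have hne2 := apply_ne_last_val hn σ ⟨k.val+1, hk⟩
  simp only [Fin.val_mk] at hne2
  by_cases hpar : k.val % 2 = 0
  · rw [if_pos hpar] at hud' ⊢
    rw [Fin.lt_def, e1, e2, dNat_lt_iff _ _ _ hne1 hne2]
    rw [Fin.lt_def] at hud'
    exact hud'
  · rw [if_neg hpar] at hud' ⊢
    rw [Fin.lt_def, e1, e2, dNat_lt_iff _ _ _ hne2 hne1]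
    rw [Fin.lt_def] at hud'
    exact hud'

lemma fPerm_last_val (hn : 1 ≤ n) (v : Fin (2*n)) (τ : Equiv.Perm (Fin (2*n-1))) :
    (fPerm hn v τ ⟨2*n, by omega⟩).val = v.val :=
  fFun_val_last v τ (show (2:ℕ)*n = 2*n from rfl) hn

lemma gPerm_fPerm (hn : 1 ≤ n) (v : Fin (2*n)) (τ : Equiv.Perm (Fin (2*n-1))) :
    gPerm hn (fPerm hn v τ) (fPerm_top hn v τ) = τ := by
  apply Equiv.ext; intro k
  apply Fin.ext
  rw [gPerm_val]
  have hk2 := k.2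
  have hfront : (fPerm hn v τ ⟨k.val, by omega⟩).val
      = eNat v.val (τ ⟨k.val, hk2⟩).val := fFun_val_lt v τ (show k.val < 2*n-1 from hk2)
  rw [fPerm_last_val, hfront, d_e]

set_option maxHeartbeats 1600000 in
lemma fPerm_gPerm (hn : 1 ≤ n) (σ : Equiv.Perm (Fin (2*n+1)))
    (hσ : σ ⟨2*n-1, by omega⟩ = ⟨2*n, by omega⟩)
    (hv : (σ ⟨2*n, by omega⟩).val < 2*n) :
    fPerm hn ⟨(σ ⟨2*n, by omega⟩).val, hv⟩ (gPerm hn σ hσ) = σ := by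
  apply Equiv.ext; intro i
  apply Fin.ext
  rw [fPerm_apply]
  have hi2 := i.2
  have key : (i.val < 2*n-1) ∨ i.val = 2*n-1 ∨ i.val = 2*n := by omega
  rcases key with hc | hc | hc
  · rw [fFun_val_lt _ _ hc]
    have e1 := gPerm_val hn σ hσ ⟨i.val, hc⟩
    simp only [Fin.val_mk] at e1
    rw [e1]
    simp only [Fin.val_mk]
    refine (e_d _ _ ?_).trans ?_
    · exact apply_ne_apply σ _ _ (by simp [Fin.ext_iff]; omega)
    · exact congrArg (fun j => (σ j).val) (Fin.ext rfl)
  · rw [fFun_val_eq _ _ hc hn]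
    have hieq : (⟨2*n-1, by omega⟩ : Fin (2*n+1)) = i := Fin.ext hc.symm
    rw [← hieq, hσ]
  · rw [fFun_val_last _ _ hc hn]
    have hieq : (⟨2*n, by omega⟩ : Fin (2*n+1)) = i := Fin.ext hc.symm
    rw [← hieq]

lemma mmp1000_eq_card {m : ℕ} (σ : Equiv.Perm (Fin m)) :
    mmp1000 σ = (Finset.univ.filter (fun i : Fin m => ∃ j : Fin m, i < j ∧ σ i < σ j)).card :=
  rfl

lemma updown_desc (hn : 1 ≤ n) (σ : Equiv.Perm (Fin (2*n+1))) (hud : IsUpDown σ) :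
    σ ⟨2*n, by omega⟩ < σ ⟨2*n-1, by omega⟩ := by
  have h := hud ⟨2*n-1, by omega⟩ (show 2*n-1+1 < 2*n+1 by omega)
  simp only [Fin.val_mk] at h
  rw [if_neg (by omega)] at h
  have he : (⟨2*n-1+1, by omega⟩ : Fin (2*n+1)) = ⟨2*n, by omega⟩ := Fin.ext (show 2*n-1+1 = 2*n by omega)
  rwa [he] at h

lemma last_not_mem (hn : 1 ≤ n) (σ : Equiv.Perm (Fin (2*n+1))) :
    (⟨2*n, by omega⟩ : Fin (2*n+1)) ∉
      Finset.univ.filter (fun i : Fin (2*n+1) => ∃ j, i < j ∧ σ i < σ j) := by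
  simp only [Finset.mem_filter, Finset.mem_univ, true_and, not_exists]
  intro j hj
  have := j.2
  rw [Fin.lt_def] at hj
  simp only [Fin.val_mk] at hj
  omega

lemma symm_top_not_mem (hn : 1 ≤ n) (σ : Equiv.Perm (Fin (2*n+1))) :
    σ.symm ⟨2*n, by omega⟩ ∉
      Finset.univ.filter (fun i : Fin (2*n+1) => ∃ j, i < j ∧ σ i < σ j) := by
  simp only [Finset.mem_filter, Finset.mem_univ, true_and, not_exists, not_and]
  intro j hj hcon
  rw [Equiv.apply_symm_apply, Fin.lt_def] at hcon
  have := (σ j).2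
  simp only [Fin.val_mk] at hcon
  omega

lemma symm_top_ne_last (hn : 1 ≤ n) (σ : Equiv.Perm (Fin (2*n+1))) (hud : IsUpDown σ) :
    σ.symm ⟨2*n, by omega⟩ ≠ ⟨2*n, by omega⟩ := by
  intro hcon
  have h1 : σ ⟨2*n, by omega⟩ = ⟨2*n, by omega⟩ := by
    conv_lhs => rw [← hcon]
    exact Equiv.apply_symm_apply σ _
  have h2 := updown_desc hn σ hud
  rw [h1, Fin.lt_def] at h2
  have := (σ ⟨2*n-1, by omega⟩).2
  simp only [Fin.val_mk] at h2
  omega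

lemma mmp_le (hn : 1 ≤ n) (σ : Equiv.Perm (Fin (2*n+1))) (hud : IsUpDown σ) :
    mmp1000 σ ≤ 2*n - 1 := by
  rw [mmp1000_eq_card]
  set last : Fin (2*n+1) := ⟨2*n, by omega⟩ with hlastdef
  set p : Fin (2*n+1) := σ.symm ⟨2*n, by omega⟩ with hpdef
  have h1 := last_not_mem hn σ
  have h2 := symm_top_not_mem hn σ
  have h3 := symm_top_ne_last hn σ hud
  have hsub : Finset.univ.filter (fun i : Fin (2*n+1) => ∃ j, i < j ∧ σ i < σ j)
      ⊆ (Finset.univ.erase last).erase p := by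
    intro x hx
    rw [Finset.mem_erase, Finset.mem_erase]
    refine ⟨?_, ?_, Finset.mem_univ x⟩
    · rintro rfl; exact h2 hx
    · rintro rfl; exact h1 hx
  have hcard := Finset.card_le_card hsub
  rw [Finset.card_erase_of_mem (Finset.mem_erase.mpr ⟨h3, Finset.mem_univ p⟩),
    Finset.card_erase_of_mem (Finset.mem_univ last), Finset.card_univ,
    Fintype.card_fin] at hcard
  omega

lemma mmp_eq_of_top (hn : 1 ≤ n) (σ : Equiv.Perm (Fin (2*n+1))) (hud : IsUpDown σ)
    (hσ : σ ⟨2*n-1, by omega⟩ = ⟨2*n, by omega⟩) : mmp1000 σ = 2*n - 1 := by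
  rw [mmp1000_eq_card]
  have hset : Finset.univ.filter (fun i : Fin (2*n+1) => ∃ j, i < j ∧ σ i < σ j)
      = Finset.univ.filter (fun i : Fin (2*n+1) => i.val < 2*n-1) := by
    ext i
    simp only [Finset.mem_filter, Finset.mem_univ, true_and]
    constructor
    · rintro ⟨j, hij, hσij⟩
      by_contra hcon
      have hi2 := i.2
      have key : i.val = 2*n-1 ∨ i.val = 2*n := by omega
      rcases key with hk | hk
      · have : σ i = ⟨2*n, by omega⟩ := by
          rw [show i = (⟨2*n-1, by omega⟩ : Fin (2*n+1)) from Fin.ext hk]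
          exact hσ
        rw [this, Fin.lt_def] at hσij
        have := (σ j).2
        simp only [Fin.val_mk] at hσij
        omega
      · rw [Fin.lt_def] at hij
        have := j.2
        omega
    · intro hi
      refine ⟨⟨2*n-1, by omega⟩, ?_, ?_⟩
      · rw [Fin.lt_def]; simpa using hi
      · rw [hσ, Fin.lt_def]
        have h1 := apply_ne_top hn σ hσ i (by omega)
        have h2 := (σ i).2
        simp only [Fin.val_mk]
        omega
  rw [hset]
  have hcompl : Finset.univ.filter (fun i : Fin (2*n+1) => i.val < 2*n-1)
      = Finset.univ \ {(⟨2*n-1, by omega⟩ : Fin (2*n+1)), ⟨2*n, by omega⟩} := by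
    ext i
    have := i.2
    simp only [Finset.mem_filter, Finset.mem_univ, true_and, Finset.mem_sdiff,
      Finset.mem_insert, Finset.mem_singleton, Fin.ext_iff, Fin.val_mk]
    omega
  rw [hcompl, Finset.card_sdiff_of_subset (by intro x _; exact Finset.mem_univ x),
    Finset.card_univ, Fintype.card_fin,
    Finset.card_pair (by simp [Fin.ext_iff]; omega)]
  omega

lemma top_of_mmp_eq (hn : 1 ≤ n) (σ : Equiv.Perm (Fin (2*n+1))) (hud : IsUpDown σ)
    (h : mmp1000 σ = 2*n - 1) : σ ⟨2*n-1, by omega⟩ = ⟨2*n, by omega⟩ := by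
  by_contra hne
  set last : Fin (2*n+1) := ⟨2*n, by omega⟩ with hlastdef
  set i1 : Fin (2*n+1) := ⟨2*n-1, by omega⟩ with hi1def
  set p : Fin (2*n+1) := σ.symm ⟨2*n, by omega⟩ with hpdef
  have hp_ne_i1 : p ≠ i1 := by
    intro hc
    apply hne
    rw [← hc, hpdef, Equiv.apply_symm_apply]
  have hp_ne_last : p ≠ last := symm_top_ne_last hn σ hud
  have hpval : p.val < 2*n-1 := by
    have := p.2
    have h1 : p.val ≠ 2*n-1 := fun hc => hp_ne_i1 (Fin.ext hc)
    have h2 : p.val ≠ 2*n := fun hc => hp_ne_last (Fin.ext hc)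
    omega
  -- the maximum over positions after p
  have hTne : (Finset.univ.filter (fun j : Fin (2*n+1) => p < j)).Nonempty := by
    refine ⟨last, ?_⟩
    simp only [Finset.mem_filter, Finset.mem_univ, true_and, Fin.lt_def, Fin.val_mk]
    show p.val < 2*n
    omega
  obtain ⟨q, hqT, hqmax⟩ := Finset.exists_max_image _ (fun j => σ j) hTne
  rw [Finset.mem_filter] at hqT
  have hi1T : i1 ∈ Finset.univ.filter (fun j : Fin (2*n+1) => p < j) := by
    simp only [Finset.mem_filter, Finset.mem_univ, true_and, Fin.lt_def]
    omega
  have hq_ne_last : q ≠ last := by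
    intro hc
    have h1 := hqmax i1 hi1T
    have h2 := updown_desc hn σ hud
    rw [hc] at h1
    exact absurd (lt_of_le_of_lt h1 h2) (lt_irrefl _)
  have hq_ne_p : q ≠ p := by
    intro hc
    rw [hc] at hqT
    exact absurd hqT.2 (lt_irrefl p)
  have hq_not : q ∉ Finset.univ.filter (fun i : Fin (2*n+1) => ∃ j, i < j ∧ σ i < σ j) := by
    simp only [Finset.mem_filter, Finset.mem_univ, true_and, not_exists, not_and]
    intro j hqj hcon
    have hjT : j ∈ Finset.univ.filter (fun j : Fin (2*n+1) => p < j) := by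
      simp only [Finset.mem_filter, Finset.mem_univ, true_and]
      exact lt_trans hqT.2 hqj
    exact absurd (lt_of_lt_of_le hcon (hqmax j hjT)) (lt_irrefl _)
  have h1 := last_not_mem hn σ
  have h2 := symm_top_not_mem hn σ
  have hsub : Finset.univ.filter (fun i : Fin (2*n+1) => ∃ j, i < j ∧ σ i < σ j)
      ⊆ ((Finset.univ.erase last).erase p).erase q := by
    intro x hx
    rw [Finset.mem_erase, Finset.mem_erase, Finset.mem_erase]
    refine ⟨?_, ?_, ?_, Finset.mem_univ x⟩
    · rintro rfl; exact hq_not hx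
    · rintro rfl; exact h2 hx
    · rintro rfl; exact h1 hx
  have hcard := Finset.card_le_card hsub
  rw [Finset.card_erase_of_mem (Finset.mem_erase.mpr ⟨hq_ne_p,
      Finset.mem_erase.mpr ⟨hq_ne_last, Finset.mem_univ q⟩⟩),
    Finset.card_erase_of_mem (Finset.mem_erase.mpr ⟨hp_ne_last, Finset.mem_univ p⟩),
    Finset.card_erase_of_mem (Finset.mem_univ last), Finset.card_univ,
    Fintype.card_fin] at hcard
  rw [mmp1000_eq_card] at h
  omega

lemma v_lt (hn : 1 ≤ n) (σ : Equiv.Perm (Fin (2*n+1)))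
    (hσ : σ ⟨2*n-1, by omega⟩ = ⟨2*n, by omega⟩) : (σ ⟨2*n, by omega⟩).val < 2*n := by
  have h1 := apply_ne_top hn σ hσ ⟨2*n, by omega⟩ (by simp only [Fin.val_mk]; omega)
  have h2 := (σ ⟨2*n, by omega⟩).2
  omega

lemma zig_top (hn : 1 ≤ n) :
    zigPerm n ⟨2*n-1, by omega⟩ = (⟨2*n, by omega⟩ : Fin (2*n+1)) := by
  apply Fin.ext
  rw [zigPerm_apply]
  unfold zigFun
  rw [dif_neg (show ¬((⟨2*n-1, by omega⟩ : Fin (2*n+1)).val % 2 = 0) by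
    simp only [Fin.val_mk]; omega)]
  simp only [Fin.val_mk]
  omega

lemma mem_UDset_iff {m : ℕ} (σ : Equiv.Perm (Fin m)) : σ ∈ UDset m ↔ IsUpDown σ := by
  simp [UDset, Finset.mem_filter]

lemma memfilter_top (hn : 1 ≤ n) (σ : Equiv.Perm (Fin (2*n+1)))
    (h1 : σ ∈ UDset (2*n+1)) (h2 : mmp1000 σ = 2*n-1) :
    σ ⟨2*n-1, by omega⟩ = ⟨2*n, by omega⟩ :=
  top_of_mmp_eq hn σ ((mem_UDset_iff σ).mp h1) h2

end Stmt13Aux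

theorem stmt13 (n : ℕ) (hn : 1 ≤ n) :
    (∀ σ ∈ UDset (2 * n + 1), mmp1000 σ ≤ 2 * n - 1) ∧
    (∃ σ ∈ UDset (2 * n + 1), mmp1000 σ = 2 * n - 1) ∧
    BcountEq n (2 * n - 1) = 2 * n * udCount (2 * n - 1) := by
  refine ⟨?_, ?_, ?_⟩
  · intro σ hσ
    exact Stmt13Aux.mmp_le hn σ ((Stmt13Aux.mem_UDset_iff σ).mp hσ)
  · refine ⟨Stmt13Aux.zigPerm n, ?_, ?_⟩
    · exact (Stmt13Aux.mem_UDset_iff _).mpr (Stmt13Aux.zigPerm_isUpDown n)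
    · exact Stmt13Aux.mmp_eq_of_top hn _ (Stmt13Aux.zigPerm_isUpDown n)
        (Stmt13Aux.zig_top hn)
  · have hrhs : 2*n*udCount (2*n-1)
        = ((Finset.univ : Finset (Fin (2*n))) ×ˢ UDset (2*n-1)).card := by
      rw [Finset.card_product, Finset.card_univ, Fintype.card_fin, udCount]
    unfold BcountEq
    rw [hrhs]
    refine Finset.card_bij'
      (fun σ hσ => ((⟨(σ ⟨2*n, by omega⟩).val,
          Stmt13Aux.v_lt hn σ (Stmt13Aux.memfilter_top hn σ (Finset.mem_filter.mp hσ).1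
            (Finset.mem_filter.mp hσ).2)⟩ : Fin (2*n)),
        Stmt13Aux.gPerm hn σ (Stmt13Aux.memfilter_top hn σ (Finset.mem_filter.mp hσ).1
            (Finset.mem_filter.mp hσ).2)))
      (fun p _ => Stmt13Aux.fPerm hn p.1 p.2) ?_ ?_ ?_ ?_
    · intro σ hσ
      rw [Finset.mem_product]
      refine ⟨Finset.mem_univ _, (Stmt13Aux.mem_UDset_iff _).mpr ?_⟩
      exact Stmt13Aux.gPerm_isUpDown hn σ _
        ((Stmt13Aux.mem_UDset_iff σ).mp (Finset.mem_filter.mp hσ).1)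
    · intro p hp
      rw [Finset.mem_product] at hp
      have hud : IsUpDown p.2 := (Stmt13Aux.mem_UDset_iff _).mp hp.2
      refine Finset.mem_filter.mpr ⟨(Stmt13Aux.mem_UDset_iff _).mpr
        (Stmt13Aux.fPerm_isUpDown hn p.1 p.2 hud), ?_⟩
      exact Stmt13Aux.mmp_eq_of_top hn _ (Stmt13Aux.fPerm_isUpDown hn p.1 p.2 hud)
        (Stmt13Aux.fPerm_top hn p.1 p.2)
    · intro σ hσ
      exact Stmt13Aux.fPerm_gPerm hn σ _ _
    · intro p hp
      refine Prod.ext ?_ ?_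
      · apply Fin.ext
        exact Stmt13Aux.fPerm_last_val hn p.1 p.2
      · exact Stmt13Aux.gPerm_fPerm hn p.1 p.2
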